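/- If μ is a finite-Laplace-transform measure on E not concentrated on any affine hyperplane, then the cumulant function k_μ is strictly convex on the interior of {θ : L_μ(θ) < ∞}; conversely, if μ is concentrated on an affine hyperplane, k_μ fails to be strictly convex. -/

import Mathlib

open MeasureTheory RealInnerProductSpace

set_option linter.unusedSectionVars false

private lemma strictConvexOn_of_convexOn_of_midpoint {E : Type*} [AddCommGroup E] [Module ℝ E]
    {s : Set E} {f : E → ℝ} (hconv : ConvexOn ℝ s f)
    (hmid : ∀ x ∈ s, ∀ y ∈ s, x ≠ y →
      f ((1/2 : ℝ) • x + (1/2 : ℝ) • y) < f x / 2 + f y / 2) :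
    StrictConvexOn ℝ s f := by
  have key : ∀ x ∈ s, ∀ y ∈ s, x ≠ y → ∀ a b : ℝ, 0 < a → 0 < b → a + b = 1 → a ≤ b →
      f (a • x + b • y) < a * f x + b * f y := by
    intro x hx y hy hxy a b ha hb hab hle
    have h2a : (0:ℝ) ≤ 2 * a := by linarith
    have h2b : (0:ℝ) ≤ 2 * b - 1 := by linarith
    have hsum : 2 * a + (2 * b - 1) = 1 := by linarith
    have hw : (2*a) • x + (2*b-1) • y ∈ s := hconv.1 hx hy h2a h2b hsum
    have hwy : y ≠ (2*a) • x + (2*b-1) • y := by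
      intro h
      have hba : (2*b - 1 : ℝ) = 1 - 2*a := by linarith
      rw [hba] at h
      have h4 : (2*a) • y = (2*a) • x := by
        calc (2*a) • y = y - (1-2*a) • y := by module
          _ = ((2*a) • x + (1-2*a) • y) - (1-2*a) • y := by rw [← h]
          _ = (2*a) • x := by module
      exact hxy (smul_right_injective E (by positivity : (2*a:ℝ) ≠ 0) h4.symm)
    have h1 := hmid y hy _ hw hwy
    have hmideq : (1/2 : ℝ) • y + (1/2 : ℝ) • ((2*a) • x + (2*b-1) • y) = a • x + b • y := by
      have hb2 : (b:ℝ) = 1/2 + (2*b-1)/2 := by linarith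
      rw [hb2]; module
    rw [hmideq] at h1
    have h2 : f ((2*a) • x + (2*b-1) • y) ≤ (2*a) * f x + (2*b-1) * f y := by
      have := hconv.2 hx hy h2a h2b hsum
      simpa [smul_eq_mul] using this
    linarith
  refine ⟨hconv.1, ?_⟩
  intro x hx y hy hxy a b ha hb hab
  rcases le_total a b with h | h
  · simpa [smul_eq_mul] using key x hx y hy hxy a b ha hb hab h
  · have := key y hy x hx hxy.symm b a hb ha (by linarith) h
    rw [add_comm (b • y) (a • x)] at this
    simp only [smul_eq_mul]
    linarith

section
variable {E : Type*} [NormedAddCommGroup E] [InnerProductSpace ℝ E]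
  [MeasurableSpace E] [BorelSpace E]

private lemma cont_integrand (θ : E) :
    Continuous fun x : E => ENNReal.ofReal (Real.exp ⟪θ, x⟫) :=
  ENNReal.continuous_ofReal.comp (Real.continuous_exp.comp (continuous_const.inner continuous_id))

private lemma holder_L (μ : Measure E) (θ₁ θ₂ : E) {t : ℝ} (ht : 0 < t) (ht1 : t < 1) :
    (∫⁻ x, ENNReal.ofReal (Real.exp ⟪t • θ₁ + (1-t) • θ₂, x⟫) ∂μ) ≤
      (∫⁻ x, ENNReal.ofReal (Real.exp ⟪θ₁, x⟫) ∂μ) ^ t *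
      (∫⁻ x, ENNReal.ofReal (Real.exp ⟪θ₂, x⟫) ∂μ) ^ (1-t) := by
  have ht' : (0:ℝ) < 1 - t := by linarith
  have hpq : (1/t).HolderConjugate (1/(1-t)) :=
    Real.holderConjugate_one_div ht ht' (by ring)
  have hf : Measurable fun x : E => ENNReal.ofReal (Real.exp (t * ⟪θ₁, x⟫)) :=
    (ENNReal.continuous_ofReal.comp (Real.continuous_exp.comp
      ((continuous_const.inner continuous_id).const_smul t))).measurable
  have hg : Measurable fun x : E => ENNReal.ofReal (Real.exp ((1-t) * ⟪θ₂, x⟫)) :=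
    (ENNReal.continuous_ofReal.comp (Real.continuous_exp.comp
      ((continuous_const.inner continuous_id).const_smul (1-t)))).measurable
  have H := ENNReal.lintegral_mul_le_Lp_mul_Lq μ hpq hf.aemeasurable hg.aemeasurable
  have e1 : ∀ x : E, ((fun x : E => ENNReal.ofReal (Real.exp (t * ⟪θ₁, x⟫))) *
      (fun x : E => ENNReal.ofReal (Real.exp ((1-t) * ⟪θ₂, x⟫)))) x
      = ENNReal.ofReal (Real.exp ⟪t • θ₁ + (1-t) • θ₂, x⟫) := by
    intro x
    simp only [Pi.mul_apply, ← ENNReal.ofReal_mul (Real.exp_pos _).le, ← Real.exp_add,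
      inner_add_left, real_inner_smul_left]
  have e2 : ∀ x : E, ENNReal.ofReal (Real.exp (t * ⟪θ₁, x⟫)) ^ (1/t)
      = ENNReal.ofReal (Real.exp ⟪θ₁, x⟫) := by
    intro x
    rw [ENNReal.ofReal_rpow_of_pos (Real.exp_pos _), ← Real.exp_mul]
    congr 1
    field_simp
  have e3 : ∀ x : E, ENNReal.ofReal (Real.exp ((1-t) * ⟪θ₂, x⟫)) ^ (1/(1-t))
      = ENNReal.ofReal (Real.exp ⟪θ₂, x⟫) := by
    intro x
    rw [ENNReal.ofReal_rpow_of_pos (Real.exp_pos _), ← Real.exp_mul]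
    congr 1
    field_simp
  rw [lintegral_congr e1, lintegral_congr e2, lintegral_congr e3, one_div_one_div,
    one_div_one_div] at H
  exact H

private lemma convex_S (μ : Measure E) :
    Convex ℝ {θ : E | ∫⁻ x, ENNReal.ofReal (Real.exp ⟪θ, x⟫) ∂μ < ⊤} := by
  intro θ₁ h₁ θ₂ h₂ a b ha hb hab
  rcases ha.eq_or_lt with rfl | ha'
  · simp only [zero_add] at hab; subst hab; simpa using h₂
  rcases hb.eq_or_lt with rfl | hb'
  · simp only [add_zero] at hab; subst hab; simpa using h₁
  have hb1 : b = 1 - a := by linarith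
  have ha1 : a < 1 := by linarith
  subst hb1
  refine lt_of_le_of_lt (holder_L μ θ₁ θ₂ ha' ha1) ?_
  exact ENNReal.mul_lt_top (ENNReal.rpow_lt_top_of_nonneg ha h₁.ne)
    (ENNReal.rpow_lt_top_of_nonneg (by linarith) h₂.ne)

private lemma L_pos {μ : Measure E} (hμ : μ ≠ 0) (θ : E) :
    0 < ∫⁻ x, ENNReal.ofReal (Real.exp ⟪θ, x⟫) ∂μ := by
  rw [lintegral_pos_iff_support (cont_integrand θ).measurable]
  have : (Function.support fun x : E => ENNReal.ofReal (Real.exp ⟪θ, x⟫)) = Set.univ :=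
    Set.eq_univ_of_forall fun x => (ENNReal.ofReal_pos.mpr (Real.exp_pos _)).ne'
  rw [this]
  exact Measure.measure_univ_pos.mpr hμ

private lemma convexOn_k {μ : Measure E} (hμ : μ ≠ 0) :
    ConvexOn ℝ (interior {θ : E | ∫⁻ x, ENNReal.ofReal (Real.exp ⟪θ, x⟫) ∂μ < ⊤})
      (fun θ : E => Real.log (∫⁻ x, ENNReal.ofReal (Real.exp ⟪θ, x⟫) ∂μ).toReal) := by
  refine ⟨(convex_S μ).interior, ?_⟩
  intro θ₁ h₁ θ₂ h₂ a b ha hb hab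
  rcases ha.eq_or_lt with rfl | ha'
  · simp only [zero_add] at hab; subst hab; simp
  rcases hb.eq_or_lt with rfl | hb'
  · simp only [add_zero] at hab; subst hab; simp
  have hb1 : b = 1 - a := by linarith
  have ha1 : a < 1 := by linarith
  subst hb1
  have h₁' : (∫⁻ x, ENNReal.ofReal (Real.exp ⟪θ₁, x⟫) ∂μ) < ⊤ := by
    have := interior_subset h₁; simpa using this
  have h₂' : (∫⁻ x, ENNReal.ofReal (Real.exp ⟪θ₂, x⟫) ∂μ) < ⊤ := by
    have := interior_subset h₂; simpa using this
  have hH := holder_L μ θ₁ θ₂ ha' ha1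
  set A := ∫⁻ x, ENNReal.ofReal (Real.exp ⟪θ₁, x⟫) ∂μ with hA
  set B := ∫⁻ x, ENNReal.ofReal (Real.exp ⟪θ₂, x⟫) ∂μ with hB
  set C := ∫⁻ x, ENNReal.ofReal (Real.exp ⟪a • θ₁ + (1-a) • θ₂, x⟫) ∂μ with hC
  have hAt : 0 < A.toReal := ENNReal.toReal_pos (L_pos hμ θ₁).ne' h₁'.ne
  have hBt : 0 < B.toReal := ENNReal.toReal_pos (L_pos hμ θ₂).ne' h₂'.ne
  have hCpos : 0 < C.toReal := ENNReal.toReal_pos (L_pos hμ _).ne' (convex_S μ h₁'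
    h₂' ha (by linarith) (by ring)).ne
  have hRHSne : A ^ a * B ^ (1-a) ≠ ⊤ :=
    (ENNReal.mul_lt_top (ENNReal.rpow_lt_top_of_nonneg ha h₁'.ne)
      (ENNReal.rpow_lt_top_of_nonneg (by linarith) h₂'.ne)).ne
  have htoReal : C.toReal ≤ A.toReal ^ a * B.toReal ^ (1-a) := by
    have := ENNReal.toReal_le_toReal (ne_of_lt (lt_of_le_of_lt hH (lt_top_iff_ne_top.mpr hRHSne)))
      hRHSne |>.mpr hH
    rwa [ENNReal.toReal_mul, ← ENNReal.toReal_rpow, ← ENNReal.toReal_rpow] at this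
  calc Real.log C.toReal ≤ Real.log (A.toReal ^ a * B.toReal ^ (1-a)) :=
        Real.log_le_log hCpos htoReal
    _ = a * Real.log A.toReal + (1-a) * Real.log B.toReal := by
        rw [Real.log_mul (Real.rpow_pos_of_pos hAt a).ne' (Real.rpow_pos_of_pos hBt _).ne',
          Real.log_rpow hAt, Real.log_rpow hBt]
    _ = a • Real.log A.toReal + (1-a) • Real.log B.toReal := by simp [smul_eq_mul]

private lemma strict_mid {μ : Measure E} (hμ : μ ≠ 0)
    (H : ¬ ∃ (a : E) (c : ℝ), a ≠ 0 ∧ μ {x : E | ⟪a, x⟫ ≠ c} = 0)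
    {θ₁ θ₂ : E} (h₁ : θ₁ ∈ interior {θ : E | ∫⁻ x, ENNReal.ofReal (Real.exp ⟪θ, x⟫) ∂μ < ⊤})
    (h₂ : θ₂ ∈ interior {θ : E | ∫⁻ x, ENNReal.ofReal (Real.exp ⟪θ, x⟫) ∂μ < ⊤})
    (hne : θ₁ ≠ θ₂) :
    Real.log (∫⁻ x, ENNReal.ofReal (Real.exp ⟪(1/2:ℝ) • θ₁ + (1/2:ℝ) • θ₂, x⟫) ∂μ).toReal <
      Real.log (∫⁻ x, ENNReal.ofReal (Real.exp ⟪θ₁, x⟫) ∂μ).toReal / 2 +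
      Real.log (∫⁻ x, ENNReal.ofReal (Real.exp ⟪θ₂, x⟫) ∂μ).toReal / 2 := by
  have hmid : (1/2:ℝ) • θ₁ + (1/2:ℝ) • θ₂ ∈
      interior {θ : E | ∫⁻ x, ENNReal.ofReal (Real.exp ⟪θ, x⟫) ∂μ < ⊤} :=
    (convex_S μ).interior h₁ h₂ (by norm_num) (by norm_num) (by norm_num)
  have hA : (∫⁻ x, ENNReal.ofReal (Real.exp ⟪θ₁, x⟫) ∂μ) < ⊤ := by
    have := interior_subset h₁; simpa using this
  have hB : (∫⁻ x, ENNReal.ofReal (Real.exp ⟪θ₂, x⟫) ∂μ) < ⊤ := by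
    have := interior_subset h₂; simpa using this
  have hC : (∫⁻ x, ENNReal.ofReal (Real.exp ⟪(1/2:ℝ) • θ₁ + (1/2:ℝ) • θ₂, x⟫) ∂μ) < ⊤ := by
    have := interior_subset hmid; simpa using this
  have hle := (convexOn_k hμ).2 h₁ h₂ (by norm_num : (0:ℝ) ≤ 1/2) (by norm_num : (0:ℝ) ≤ 1/2)
    (by norm_num : (1/2:ℝ) + 1/2 = 1)
  simp only [smul_eq_mul] at hle
  rcases lt_or_eq_of_le hle with h | heq
  · calc _ < _ := h
      _ = _ := by ring
  exfalso
  -- real-valued integrals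
  set F : E → ℝ := fun x => Real.exp ⟪θ₁, x⟫ with hF
  set G : E → ℝ := fun x => Real.exp ⟪θ₂, x⟫ with hG
  set M : E → ℝ := fun x => Real.exp ⟪(1/2:ℝ) • θ₁ + (1/2:ℝ) • θ₂, x⟫ with hM
  have contF : Continuous F := Real.continuous_exp.comp (continuous_const.inner continuous_id)
  have contG : Continuous G := Real.continuous_exp.comp (continuous_const.inner continuous_id)
  have contM : Continuous M := Real.continuous_exp.comp (continuous_const.inner continuous_id)
  have intF : Integrable F μ := ⟨contF.aestronglyMeasurable,
    (hasFiniteIntegral_iff_ofReal (ae_of_all _ fun x => (Real.exp_pos _).le)).2 hA⟩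
  have intG : Integrable G μ := ⟨contG.aestronglyMeasurable,
    (hasFiniteIntegral_iff_ofReal (ae_of_all _ fun x => (Real.exp_pos _).le)).2 hB⟩
  have intM : Integrable M μ := ⟨contM.aestronglyMeasurable,
    (hasFiniteIntegral_iff_ofReal (ae_of_all _ fun x => (Real.exp_pos _).le)).2 hC⟩
  set α := ∫ x, F x ∂μ with hα
  set β := ∫ x, G x ∂μ with hβ
  set γ := ∫ x, M x ∂μ with hγ
  have hαeq : ENNReal.ofReal α = ∫⁻ x, ENNReal.ofReal (Real.exp ⟪θ₁, x⟫) ∂μ :=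
    ofReal_integral_eq_lintegral_ofReal intF (ae_of_all _ fun x => (Real.exp_pos _).le)
  have hβeq : ENNReal.ofReal β = ∫⁻ x, ENNReal.ofReal (Real.exp ⟪θ₂, x⟫) ∂μ :=
    ofReal_integral_eq_lintegral_ofReal intG (ae_of_all _ fun x => (Real.exp_pos _).le)
  have hγeq : ENNReal.ofReal γ =
      ∫⁻ x, ENNReal.ofReal (Real.exp ⟪(1/2:ℝ) • θ₁ + (1/2:ℝ) • θ₂, x⟫) ∂μ :=
    ofReal_integral_eq_lintegral_ofReal intM (ae_of_all _ fun x => (Real.exp_pos _).le)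
  have hαpos : 0 < α := by
    have := L_pos hμ θ₁; rw [← hαeq] at this; exact ENNReal.ofReal_pos.mp this
  have hβpos : 0 < β := by
    have := L_pos hμ θ₂; rw [← hβeq] at this; exact ENNReal.ofReal_pos.mp this
  have hγpos : 0 < γ := by
    have := L_pos hμ ((1/2:ℝ) • θ₁ + (1/2:ℝ) • θ₂); rw [← hγeq] at this
    exact ENNReal.ofReal_pos.mp this
  have htA : (∫⁻ x, ENNReal.ofReal (Real.exp ⟪θ₁, x⟫) ∂μ).toReal = α := by
    rw [← hαeq, ENNReal.toReal_ofReal hαpos.le]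
  have htB : (∫⁻ x, ENNReal.ofReal (Real.exp ⟪θ₂, x⟫) ∂μ).toReal = β := by
    rw [← hβeq, ENNReal.toReal_ofReal hβpos.le]
  have htC : (∫⁻ x, ENNReal.ofReal (Real.exp ⟪(1/2:ℝ) • θ₁ + (1/2:ℝ) • θ₂, x⟫) ∂μ).toReal = γ := by
    rw [← hγeq, ENNReal.toReal_ofReal hγpos.le]
  rw [htA, htB, htC] at heq
  -- γ² = αβ
  have hlog : Real.log (γ^2) = Real.log (α*β) := by
    rw [Real.log_pow, Real.log_mul hαpos.ne' hβpos.ne']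
    push_cast
    linarith
  have hsq : γ^2 = α*β :=
    Real.log_injOn_pos (Set.mem_Ioi.2 (by positivity)) (Set.mem_Ioi.2 (by positivity)) hlog
  -- the quadratic form
  set Q : E → ℝ := fun x => β^2 * F x - (2*β*γ) * M x + γ^2 * G x with hQ
  have hinner : ∀ x : E, ⟪(1/2:ℝ) • θ₁ + (1/2:ℝ) • θ₂, x⟫ = ⟪θ₁,x⟫/2 + ⟪θ₂,x⟫/2 := by
    intro x
    rw [inner_add_left, real_inner_smul_left, real_inner_smul_left]
    ring
  have hQsq : ∀ x : E, Q x =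
      (β * Real.exp (⟪θ₁,x⟫/2) - γ * Real.exp (⟪θ₂,x⟫/2))^2 := by
    intro x
    have e1 : F x = Real.exp (⟪θ₁,x⟫/2) * Real.exp (⟪θ₁,x⟫/2) := by
      simp only [hF, ← Real.exp_add]; congr 1; ring
    have e2 : G x = Real.exp (⟪θ₂,x⟫/2) * Real.exp (⟪θ₂,x⟫/2) := by
      simp only [hG, ← Real.exp_add]; congr 1; ring
    have e3 : M x = Real.exp (⟪θ₁,x⟫/2) * Real.exp (⟪θ₂,x⟫/2) := by
      simp only [hM, ← Real.exp_add]; rw [hinner x]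
    simp only [hQ]; rw [e1, e2, e3]; ring
  have intQ : Integrable Q μ :=
    ((intF.const_mul (β^2)).sub (intM.const_mul (2*β*γ))).add (intG.const_mul (γ^2))
  have hintQ : ∫ x, Q x ∂μ = 0 := by
    have i1 : ∫ x, (β^2 * F x - 2*β*γ * M x + γ^2 * G x) ∂μ
        = (∫ x, (β^2 * F x - 2*β*γ * M x) ∂μ) + ∫ x, γ^2 * G x ∂μ :=
      integral_add ((intF.const_mul _).sub (intM.const_mul _)) (intG.const_mul _)
    have i2 : ∫ x, (β^2 * F x - 2*β*γ * M x) ∂μ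
        = (∫ x, β^2 * F x ∂μ) - ∫ x, 2*β*γ * M x ∂μ :=
      integral_sub (intF.const_mul _) (intM.const_mul _)
    have : ∫ x, Q x ∂μ = β^2 * α - (2*β*γ) * γ + γ^2 * β := by
      simp only [hQ]
      rw [i1, i2, integral_const_mul, integral_const_mul, integral_const_mul]
    rw [this]
    linear_combination (-β) * hsq
  have haeQ : Q =ᵐ[μ] 0 :=
    (integral_eq_zero_iff_of_nonneg (fun x => by rw [hQsq x]; positivity) intQ).mp hintQ
  have haec : ∀ᵐ x ∂μ, ⟪θ₁ - θ₂, x⟫ = 2 * Real.log (γ/β) := by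
    refine haeQ.mono fun x hx => ?_
    have hx' : (β * Real.exp (⟪θ₁,x⟫/2) - γ * Real.exp (⟪θ₂,x⟫/2))^2 = 0 := by
      rw [← hQsq x]; exact hx
    have h5 : β * Real.exp (⟪θ₁,x⟫/2) = γ * Real.exp (⟪θ₂,x⟫/2) := by
      have := pow_eq_zero_iff (n := 2) (by norm_num) |>.mp hx'
      linarith [sub_eq_zero.mp this]
    have h6 : Real.exp (⟪θ₁ - θ₂, x⟫ / 2) = γ/β := by
      rw [inner_sub_left, show (⟪θ₁,x⟫ - ⟪θ₂,x⟫)/2 = ⟪θ₁,x⟫/2 - ⟪θ₂,x⟫/2 from by ring,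
        Real.exp_sub, div_eq_div_iff (Real.exp_pos _).ne' hβpos.ne']
      linarith
    have := congrArg Real.log h6
    rw [Real.log_exp] at this
    linarith
  exact H ⟨θ₁ - θ₂, 2 * Real.log (γ/β), sub_ne_zero.mpr hne, ae_iff.mp haec⟩

private lemma translate_L (μ : Measure E) {a : E} {c : ℝ} (hac : μ {x : E | ⟪a, x⟫ ≠ c} = 0)
    (θ : E) (t : ℝ) :
    (∫⁻ x, ENNReal.ofReal (Real.exp ⟪θ + t • a, x⟫) ∂μ)
      = ENNReal.ofReal (Real.exp (t*c)) * ∫⁻ x, ENNReal.ofReal (Real.exp ⟪θ, x⟫) ∂μ := by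
  have hae : ∀ᵐ x ∂μ, ⟪a, x⟫ = c := ae_iff.mpr hac
  rw [← lintegral_const_mul' _ _ ENNReal.ofReal_ne_top]
  refine lintegral_congr_ae (hae.mono fun x hx => ?_)
  simp only []
  rw [inner_add_left, real_inner_smul_left, hx, ← ENNReal.ofReal_mul (Real.exp_pos _).le,
    ← Real.exp_add, add_comm]


end

/-- If `μ` is not concentrated on any affine hyperplane, then the cumulant function
`k_μ = log L_μ` is strictly convex on the interior of `{θ : L_μ(θ) < ∞}`; conversely,
if `μ` is concentrated on an affine hyperplane (and the interior is nonempty),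
strict convexity fails. -/
theorem cumulant_strictConvexOn_iff_not_hyperplane {E : Type*} [NormedAddCommGroup E]
    [InnerProductSpace ℝ E] [FiniteDimensional ℝ E] [MeasurableSpace E] [BorelSpace E]
    (μ : Measure E) :
    ((¬ ∃ (a : E) (c : ℝ), a ≠ 0 ∧ μ {x : E | ⟪a, x⟫ ≠ c} = 0) →
      StrictConvexOn ℝ (interior {θ : E | ∫⁻ x, ENNReal.ofReal (Real.exp ⟪θ, x⟫) ∂μ < ⊤})
        (fun θ : E => Real.log (∫⁻ x, ENNReal.ofReal (Real.exp ⟪θ, x⟫) ∂μ).toReal)) ∧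
    (((interior {θ : E | ∫⁻ x, ENNReal.ofReal (Real.exp ⟪θ, x⟫) ∂μ < ⊤}).Nonempty ∧
        ∃ (a : E) (c : ℝ), a ≠ 0 ∧ μ {x : E | ⟪a, x⟫ ≠ c} = 0) →
      ¬ StrictConvexOn ℝ (interior {θ : E | ∫⁻ x, ENNReal.ofReal (Real.exp ⟪θ, x⟫) ∂μ < ⊤})
        (fun θ : E => Real.log (∫⁻ x, ENNReal.ofReal (Real.exp ⟪θ, x⟫) ∂μ).toReal)) := by
  constructor
  · intro H
    by_cases hE : ∃ a : E, a ≠ 0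
    · have hμ : μ ≠ 0 := fun h0 => H ⟨hE.choose, 0, hE.choose_spec, by simp [h0]⟩
      refine strictConvexOn_of_convexOn_of_midpoint (convexOn_k hμ) ?_
      intro x hx y hy hxy
      exact strict_mid hμ H hx hy hxy
    · push_neg at hE
      refine ⟨(convex_S μ).interior, ?_⟩
      intro x hx y hy hxy
      exact absurd (sub_eq_zero.mp (hE (x - y))) hxy
  · rintro ⟨⟨θ₀, hθ₀⟩, a, c, ha, hac⟩ hsc
    have hLt := translate_L μ hac
    have hmemS : ∀ (θ : E) (t : ℝ),
        θ + t • a ∈ {θ : E | ∫⁻ x, ENNReal.ofReal (Real.exp ⟪θ, x⟫) ∂μ < ⊤} ↔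
        θ ∈ {θ : E | ∫⁻ x, ENNReal.ofReal (Real.exp ⟪θ, x⟫) ∂μ < ⊤} := by
      intro θ t
      simp only [Set.mem_setOf_eq, hLt θ t]
      constructor
      · intro h
        by_contra h'
        rw [not_lt, top_le_iff] at h'
        rw [h', ENNReal.mul_top (ENNReal.ofReal_pos.mpr (Real.exp_pos _)).ne'] at h
        exact absurd h (lt_irrefl _)
      · intro h
        exact ENNReal.mul_lt_top ENNReal.ofReal_lt_top h
    have hmemInt : ∀ t : ℝ,
        θ₀ + t • a ∈ interior {θ : E | ∫⁻ x, ENNReal.ofReal (Real.exp ⟪θ, x⟫) ∂μ < ⊤} := by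
      intro t
      set S := {θ : E | ∫⁻ x, ENNReal.ofReal (Real.exp ⟪θ, x⟫) ∂μ < ⊤} with hS
      have himg : (⇑(Homeomorph.addRight (t • a))) '' S = S := by
        ext y
        simp only [Set.mem_image, Homeomorph.coe_addRight]
        constructor
        · rintro ⟨x, hxS, rfl⟩; exact (hmemS x t).mpr hxS
        · intro hy
          exact ⟨y - t • a, (hmemS (y - t • a) t).mp (by rwa [sub_add_cancel]),
            sub_add_cancel y (t • a)⟩
      have h2 : θ₀ + t • a ∈ (⇑(Homeomorph.addRight (t • a))) '' interior S :=
        ⟨θ₀, hθ₀, rfl⟩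
      rw [(Homeomorph.addRight (t • a)).image_interior S, himg] at h2
      exact h2
    by_cases hμ0 : μ = 0
    · subst hμ0
      have hne1 : θ₀ ≠ θ₀ + (1:ℝ) • a := by
        intro h
        exact ha (by simpa using (left_eq_add.mp (by rwa [one_smul] at h)))
      have hkey := hsc.2 hθ₀ (hmemInt 1) hne1 one_half_pos one_half_pos (by norm_num)
      simp only [lintegral_zero_measure, ENNReal.toReal_zero, Real.log_zero, smul_eq_mul,
        mul_zero, add_zero] at hkey
      exact absurd hkey (lt_irrefl _)
    · have hLθ₀top : (∫⁻ x, ENNReal.ofReal (Real.exp ⟪θ₀, x⟫) ∂μ) < ⊤ := by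
        have := interior_subset hθ₀; simpa using this
      have hLθ₀pos := L_pos hμ0 θ₀
      have hk : ∀ t : ℝ,
          Real.log (∫⁻ x, ENNReal.ofReal (Real.exp ⟪θ₀ + t • a, x⟫) ∂μ).toReal =
            t * c + Real.log (∫⁻ x, ENNReal.ofReal (Real.exp ⟪θ₀, x⟫) ∂μ).toReal := by
        intro t
        rw [hLt θ₀ t, ENNReal.toReal_mul, ENNReal.toReal_ofReal (Real.exp_pos _).le,
          Real.log_mul (Real.exp_ne_zero _)
            (ENNReal.toReal_pos hLθ₀pos.ne' hLθ₀top.ne).ne', Real.log_exp]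
      have hne2 : θ₀ ≠ θ₀ + (2:ℝ) • a := by
        intro h
        have h2 := left_eq_add.mp h
        exact ha ((smul_eq_zero.mp h2).resolve_left (by norm_num))
      have hkey := hsc.2 hθ₀ (hmemInt 2) hne2 one_half_pos one_half_pos (by norm_num)
      have hmid2 : (1/2:ℝ) • θ₀ + (1/2:ℝ) • (θ₀ + (2:ℝ) • a) = θ₀ + (1:ℝ) • a := by module
      rw [hmid2] at hkey
      simp only [smul_eq_mul] at hkey
      rw [hk 1, hk 2] at hkey
      linarith
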